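/- Let r ≥ 1 and define S(k;r) := ∑_{i=1}^k i^r and f₁(k;r) := (1/2) · r^r/(r+1)^{r+1} · (2k+1)^{r+1}/S(k;r). Then f₁(k;r) is nonincreasing in the integer k ≥ 1. -/

import Mathlib

open Real Set Finset

private lemma hda_plus (p : ℝ) {s : ℝ} (h : (2:ℝ) + s ≠ 0) :
    HasDerivAt (fun x : ℝ => (2 + x) ^ p) (p * (2 + s) ^ (p - 1)) s := by
  have h1 : HasDerivAt (fun x : ℝ => 2 + x) 1 s := by
    simpa using (hasDerivAt_id s).const_add (2:ℝ)
  have h2 := (Real.hasDerivAt_rpow_const (x := 2 + s) (p := p) (Or.inl h)).comp s h1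
  exact h2.congr_deriv (by ring)

private lemma hda_minus (p : ℝ) {s : ℝ} (h : (2:ℝ) - s ≠ 0) :
    HasDerivAt (fun x : ℝ => (2 - x) ^ p) (-(p * (2 - s) ^ (p - 1))) s := by
  have h1 : HasDerivAt (fun x : ℝ => 2 - x) (-1) s := by
    simpa using (hasDerivAt_id s).const_sub (2:ℝ)
  have h2 := (Real.hasDerivAt_rpow_const (x := 2 - s) (p := p) (Or.inl h)).comp s h1
  exact h2.congr_deriv (by ring)

private lemma hdaK (r : ℝ) {s : ℝ} (h1 : (2:ℝ) + s ≠ 0) (h2 : (2:ℝ) - s ≠ 0) :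
    HasDerivAt (fun x : ℝ => (2 + x) ^ (r+1) - (2 - x) ^ (r+1))
      ((r+1) * ((2 + s) ^ r + (2 - s) ^ r)) s := by
  have := (hda_plus (r+1) h1).sub (hda_minus (r+1) h2)
  have e : (r+1) - 1 = r := by ring
  rw [e] at this
  exact this.congr_deriv (by ring)

private lemma hdaN (r : ℝ) {s : ℝ} (h1 : (2:ℝ) + s ≠ 0) (h2 : (2:ℝ) - s ≠ 0) :
    HasDerivAt (fun x : ℝ => (r+1) * x * ((2 + x) ^ r + (2 - x) ^ r)
        - ((2 + x) ^ (r+1) - (2 - x) ^ (r+1)))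
      ((r+1) * r * s * ((2 + s) ^ (r-1) - (2 - s) ^ (r-1))) s := by
  have ha : HasDerivAt (fun x : ℝ => (r+1) * x) (r+1) s := by
    simpa using (hasDerivAt_id s).const_mul (r+1)
  have hb := (hda_plus r h1).add (hda_minus r h2)
  have hprod := ha.mul hb
  have := hprod.sub (hdaK r h1 h2)
  exact this.congr_deriv (by simp only [Pi.add_apply]; ring)

/-- N(s) ≥ 0 on [0,1]. -/
private lemma N_nonneg (r : ℝ) (hr : 1 ≤ r) {s : ℝ} (hs : s ∈ Icc (0:ℝ) 1) :
    0 ≤ (r+1) * s * ((2 + s) ^ r + (2 - s) ^ r)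
        - ((2 + s) ^ (r+1) - (2 - s) ^ (r+1)) := by
  set N : ℝ → ℝ := fun x => (r+1) * x * ((2 + x) ^ r + (2 - x) ^ r)
        - ((2 + x) ^ (r+1) - (2 - x) ^ (r+1)) with hN
  have hder : ∀ x ∈ Icc (0:ℝ) 1,
      HasDerivAt N ((r+1) * r * x * ((2 + x) ^ (r-1) - (2 - x) ^ (r-1))) x := by
    intro x hx
    exact hdaN r (by nlinarith [hx.1, hx.2]) (by nlinarith [hx.1, hx.2])
  have hmono : MonotoneOn N (Icc (0:ℝ) 1) := by
    apply monotoneOn_of_deriv_nonneg (convex_Icc 0 1)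
    · intro x hx; exact (hder x hx).continuousAt.continuousWithinAt
    · intro x hx
      rw [interior_Icc] at hx
      exact (hder x (Ioo_subset_Icc_self hx)).differentiableAt.differentiableWithinAt
    · intro x hx
      rw [interior_Icc] at hx
      rw [(hder x (Ioo_subset_Icc_self hx)).deriv]
      have hle : (2 - x) ^ (r-1) ≤ (2 + x) ^ (r-1) :=
        Real.rpow_le_rpow (by linarith [hx.1, hx.2]) (by linarith [hx.1]) (by linarith)
      have hc : (0:ℝ) ≤ (r+1) * r * x :=
        mul_nonneg (mul_nonneg (by linarith) (by linarith)) hx.1.le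
      nlinarith [hc, hle]
  have h0 : N 0 = 0 := by simp [hN]
  have := hmono (left_mem_Icc.mpr zero_le_one) hs hs.1
  rw [h0] at this
  simpa [hN] using this

/-- h(s) = ((2+s)^{r+1} - (2-s)^{r+1})/s is monotone on (0,1]. -/
private lemma h_mono (r : ℝ) (hr : 1 ≤ r) :
    MonotoneOn (fun s : ℝ => ((2 + s) ^ (r+1) - (2 - s) ^ (r+1)) / s) (Ioc (0:ℝ) 1) := by
  have hder : ∀ x ∈ Ioc (0:ℝ) 1,
      HasDerivAt (fun s : ℝ => ((2 + s) ^ (r+1) - (2 - s) ^ (r+1)) / s)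
        (((r+1) * ((2 + x) ^ r + (2 - x) ^ r) * x
        - ((2 + x) ^ (r+1) - (2 - x) ^ (r+1)) * 1) / x ^ 2) x := by
    intro x hx
    exact (hdaK r (by nlinarith [hx.1, hx.2]) (by nlinarith [hx.1, hx.2])).div
      (hasDerivAt_id x) (ne_of_gt hx.1)
  apply monotoneOn_of_deriv_nonneg (convex_Ioc 0 1)
  · intro x hx; exact (hder x hx).continuousAt.continuousWithinAt
  · intro x hx
    rw [interior_Ioc] at hx
    exact (hder x (Ioo_subset_Ioc_self hx)).differentiableAt.differentiableWithinAt
  · intro x hx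
    rw [interior_Ioc] at hx
    rw [(hder x (Ioo_subset_Ioc_self hx)).deriv]
    apply div_nonneg _ (sq_nonneg x)
    have := N_nonneg r hr (s := x) ⟨le_of_lt hx.1, le_of_lt hx.2⟩
    nlinarith [this]

/-- Ratio lemma. -/
private lemma ratio_lemma (r : ℝ) (hr : 1 ≤ r) {a b : ℝ} (ha : 1 ≤ a) (hab : a ≤ b) :
    ((2*b+1) ^ (r+1) - (2*b-1) ^ (r+1)) * a ^ r
      ≤ ((2*a+1) ^ (r+1) - (2*a-1) ^ (r+1)) * b ^ r := by
  have ha0 : (0:ℝ) < a := by linarith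
  have hb0 : (0:ℝ) < b := by linarith
  have hib : 1/b ≤ 1 := by rw [div_le_one hb0]; linarith
  have hia : 1/a ≤ 1 := by rw [div_le_one ha0]; linarith
  have hs : (1/b) ∈ Ioc (0:ℝ) 1 := ⟨by positivity, hib⟩
  have ht : (1/a) ∈ Ioc (0:ℝ) 1 := ⟨by positivity, hia⟩
  have hst : (1/b) ≤ (1/a) := by
    apply one_div_le_one_div_of_le ha0 hab
  have key := h_mono r hr hs ht hst
  simp only [one_div] at key
  simp only [div_eq_mul_inv, inv_inv] at key
  -- key : ((2+b⁻¹)^{r+1} - (2-b⁻¹)^{r+1}) * b ≤ ((2+a⁻¹)^{r+1} - (2-a⁻¹)^{r+1}) * a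
  have eb1 : (2*b+1) ^ (r+1) = b ^ (r+1) * (2 + b⁻¹) ^ (r+1) := by
    rw [← Real.mul_rpow hb0.le (by positivity)]
    congr 1; field_simp
  have eb2 : (2*b-1) ^ (r+1) = b ^ (r+1) * (2 - b⁻¹) ^ (r+1) := by
    rw [← Real.mul_rpow hb0.le (by rw [← one_div]; linarith)]
    congr 1; field_simp
  have ea1 : (2*a+1) ^ (r+1) = a ^ (r+1) * (2 + a⁻¹) ^ (r+1) := by
    rw [← Real.mul_rpow ha0.le (by positivity)]
    congr 1; field_simp
  have ea2 : (2*a-1) ^ (r+1) = a ^ (r+1) * (2 - a⁻¹) ^ (r+1) := by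
    rw [← Real.mul_rpow ha0.le (by rw [← one_div]; linarith)]
    congr 1; field_simp
  have hbr : b ^ (r+1) = b ^ r * b := by
    rw [Real.rpow_add hb0, Real.rpow_one]
  have har : a ^ (r+1) = a ^ r * a := by
    rw [Real.rpow_add ha0, Real.rpow_one]
  have hpos : (0:ℝ) ≤ a ^ r * b ^ r := by positivity
  have hmul := mul_le_mul_of_nonneg_left key hpos
  rw [eb1, eb2, ea1, ea2, hbr, har]
  linear_combination hmul

private lemma telescope (r : ℝ) (k : ℕ) :
    ∑ i ∈ Icc 1 k, ((2*(i:ℝ)+1)^(r+1) - (2*(i:ℝ)-1)^(r+1)) = (2*(k:ℝ)+1)^(r+1) - 1 := by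
  induction k with
  | zero => norm_num [Real.one_rpow]
  | succ n ih =>
    rw [Finset.sum_Icc_succ_top (by omega), ih]
    push_cast
    have e : 2*((n:ℝ)+1)-1 = 2*(n:ℝ)+1 := by ring
    rw [e]
    ring

private lemma S_pos (r : ℝ) {k : ℕ} (hk : 1 ≤ k) : 0 < ∑ i ∈ Icc 1 k, (i:ℝ)^r := by
  apply Finset.sum_pos
  · intro i hi
    have : 1 ≤ i := (Finset.mem_Icc.mp hi).1
    exact Real.rpow_pos_of_pos (by exact_mod_cast this) r
  · exact ⟨1, Finset.mem_Icc.mpr ⟨le_refl 1, hk⟩⟩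

private lemma step_ineq (r : ℝ) (hr : 1 ≤ r) (k : ℕ) (hk : 1 ≤ k) :
    (1 / 2) * (r ^ r / (r + 1) ^ (r + 1)) *
        ((2 * ((k+1 : ℕ) : ℝ) + 1) ^ (r + 1) / ∑ i ∈ Finset.Icc 1 (k+1), (i : ℝ) ^ r)
      ≤ (1 / 2) * (r ^ r / (r + 1) ^ (r + 1)) *
        ((2 * (k : ℝ) + 1) ^ (r + 1) / ∑ i ∈ Finset.Icc 1 k, (i : ℝ) ^ r) := by
  have hr0 : (0:ℝ) < r := by linarith
  have hC : (0:ℝ) ≤ (1 / 2) * (r ^ r / (r + 1) ^ (r + 1)) := by positivity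
  apply mul_le_mul_of_nonneg_left _ hC
  have hS1 : (0:ℝ) < ∑ i ∈ Icc 1 k, (i:ℝ)^r := S_pos r hk
  have hS2 : (0:ℝ) < ∑ i ∈ Icc 1 (k+1), (i:ℝ)^r := S_pos r (by omega)
  rw [div_le_div_iff₀ hS2 hS1]
  have hSsucc : ∑ i ∈ Icc 1 (k+1), (i:ℝ)^r
      = (∑ i ∈ Icc 1 k, (i:ℝ)^r) + ((k:ℝ)+1)^r := by
    rw [Finset.sum_Icc_succ_top (by omega)]
    push_cast; ring_nf
  -- termwise ratio inequality
  have hterm : ∀ i ∈ Finset.Icc 1 k,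
      ((2*((k:ℝ)+1)+1)^(r+1) - (2*((k:ℝ)+1)-1)^(r+1)) * (i:ℝ)^r
        ≤ ((2*(i:ℝ)+1)^(r+1) - (2*(i:ℝ)-1)^(r+1)) * ((k:ℝ)+1)^r := by
    intro i hi
    obtain ⟨h1, h2⟩ := Finset.mem_Icc.mp hi
    have hik : (i:ℝ) ≤ (k:ℝ) := by exact_mod_cast h2
    exact ratio_lemma r hr (by exact_mod_cast h1) (by linarith)
  have hsum := Finset.sum_le_sum hterm
  rw [← Finset.mul_sum, ← Finset.sum_mul, telescope r k] at hsum
  -- hsum : D(k+1) * S k ≤ ((2k+1)^{r+1} - 1) * (k+1)^r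
  have hP : (0:ℝ) ≤ ((k:ℝ)+1)^r := Real.rpow_nonneg (by positivity) r
  have hcast : ((k+1 : ℕ) : ℝ) = (k:ℝ) + 1 := by push_cast; ring
  rw [hcast, hSsucc]
  have he : 2*((k:ℝ)+1)-1 = 2*(k:ℝ)+1 := by ring
  rw [he] at hsum
  nlinarith [hsum, hP, hS1.le]

theorem stmt_8 (r : ℝ) (hr : 1 ≤ r) :
    AntitoneOn (fun k : ℕ =>
      (1 / 2) * (r ^ r / (r + 1) ^ (r + 1)) *
        ((2 * (k : ℝ) + 1) ^ (r + 1) / ∑ i ∈ Finset.Icc 1 k, (i : ℝ) ^ r))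
      (Set.Ici 1) := by
  intro m hm n hn hmn
  simp only [Set.mem_Ici] at hm hn
  obtain ⟨d, rfl⟩ := Nat.exists_eq_add_of_le hmn
  clear hn hmn
  induction d with
  | zero => rw [Nat.add_zero]
  | succ e ih =>
    have he : m + (e+1) = (m+e)+1 := by omega
    rw [he]
    exact le_trans (step_ineq r hr (m + e) (by omega)) ih
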